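/- For all u > 0 and δ ∈ (0, 1], one has u − log u − 1 ≤ δ·(u + 1/u − 2) + (−log δ + δ − 1)·(u − 1)². -/

import Mathlib

open Real

noncomputable def Hfun (u : ℝ) : ℝ :=
  Real.log u - u + 1 + (u - 1) ^ 2 * (Real.log (u + 1) - Real.log u)

lemma Hfun_hasDeriv {x : ℝ} (hx : 0 < x) :
    HasDerivAt Hfun
      (x⁻¹ - 1 + ((2 * (x - 1)) * (Real.log (x + 1) - Real.log x)
        + (x - 1) ^ 2 * ((x + 1)⁻¹ - x⁻¹))) x := by
  have hlogu : HasDerivAt (fun y : ℝ => Real.log y) x⁻¹ x := Real.hasDerivAt_log hx.ne'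
  have hlogu1 : HasDerivAt (fun y : ℝ => Real.log (y + 1)) (x + 1)⁻¹ x := by
    have h := (Real.hasDerivAt_log (by positivity : x + 1 ≠ 0)).comp x
      ((hasDerivAt_id x).add_const 1)
    simpa [Function.comp_def] using h
  have hsq : HasDerivAt (fun y : ℝ => (y - 1) ^ 2) (2 * (x - 1)) x := by
    have := ((hasDerivAt_id x).sub_const 1).pow 2
    simpa [Pi.pow_def] using this
  have h1 : HasDerivAt (fun y : ℝ => Real.log y - y + 1) (x⁻¹ - 1) x := by
    simpa using (hlogu.sub (hasDerivAt_id x)).add_const 1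
  have h2 : HasDerivAt (fun y : ℝ => (y - 1) ^ 2 * (Real.log (y + 1) - Real.log y))
      ((2 * (x - 1)) * (Real.log (x + 1) - Real.log x)
        + (x - 1) ^ 2 * ((x + 1)⁻¹ - x⁻¹)) x := hsq.mul (hlogu1.sub hlogu)
  exact h1.add h2

lemma key_log {x : ℝ} (hx : 0 < x) :
    1 / (x + 1) ≤ Real.log (x + 1) - Real.log x := by
  have hx1 : (0:ℝ) < x + 1 := by linarith
  have h := Real.log_le_sub_one_of_pos (show 0 < x / (x + 1) by positivity)
  rw [Real.log_div hx.ne' hx1.ne'] at h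
  have he : x / (x + 1) - 1 = -(1 / (x + 1)) := by field_simp; ring
  rw [he] at h
  linarith

lemma deriv_Hfun_eq {x : ℝ} (hx : 0 < x) :
    deriv Hfun x = 2 * (x - 1) * ((Real.log (x + 1) - Real.log x) - 1 / (x + 1)) := by
  rw [(Hfun_hasDeriv hx).deriv]
  have hx1 : (0:ℝ) < x + 1 := by linarith
  field_simp
  ring

lemma Hfun_nonneg {u : ℝ} (hu : 0 < u) : 0 ≤ Hfun u := by
  have h1 : Hfun 1 = 0 := by simp [Hfun]
  have hcont : ∀ s : Set ℝ, s ⊆ Set.Ioi (0:ℝ) → ContinuousOn Hfun s := by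
    intro s hs x hxs
    exact ((Hfun_hasDeriv (hs hxs)).differentiableAt.continuousAt).continuousWithinAt
  rcases le_or_gt 1 u with h | h
  · rcases eq_or_lt_of_le h with rfl | h'
    · rw [← h1]
    · have hmono : MonotoneOn Hfun (Set.Icc 1 u) := by
        apply monotoneOn_of_deriv_nonneg (convex_Icc 1 u)
        · exact hcont _ (fun x hx => by simp at hx ⊢; linarith [hx.1])
        · intro x hx
          rw [interior_Icc] at hx
          exact ((Hfun_hasDeriv (by linarith [hx.1])).differentiableAt).differentiableWithinAt
        · intro x hx
          rw [interior_Icc] at hx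
          have hx0 : (0:ℝ) < x := by linarith [hx.1]
          rw [deriv_Hfun_eq hx0]
          have := key_log hx0
          nlinarith [hx.1]
      have := hmono (Set.left_mem_Icc.2 h) (Set.right_mem_Icc.2 h) h
      rw [h1] at this; exact this
  · have hanti : AntitoneOn Hfun (Set.Icc u 1) := by
      apply antitoneOn_of_deriv_nonpos (convex_Icc u 1)
      · exact hcont _ (fun x hx => by simp at hx ⊢; linarith [hx.1])
      · intro x hx
        rw [interior_Icc] at hx
        exact ((Hfun_hasDeriv (by linarith [hx.1])).differentiableAt).differentiableWithinAt
      · intro x hx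
        rw [interior_Icc] at hx
        have hx0 : (0:ℝ) < x := lt_trans hu hx.1
        rw [deriv_Hfun_eq hx0]
        have := key_log hx0
        nlinarith [hx.2]
    have := hanti (Set.left_mem_Icc.2 h.le) (Set.right_mem_Icc.2 h.le) h.le
    rw [h1] at this; exact this

theorem hsi_pointwise_inequality (u δ : ℝ) (hu : 0 < u) (hδ0 : 0 < δ) (hδ1 : δ ≤ 1) :
    u - Real.log u - 1 ≤
      δ * (u + 1/u - 2) + (-Real.log δ + δ - 1) * (u - 1) ^ 2 := by
  have hu1 : (0:ℝ) < u + 1 := by linarith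
  -- Step A: log(δ(u+1)/u) ≤ δ(u+1)/u - 1
  have hx : (0:ℝ) < δ * (u + 1) / u := by positivity
  have hA := Real.log_le_sub_one_of_pos hx
  rw [Real.log_div (by positivity) hu.ne', Real.log_mul hδ0.ne' hu1.ne'] at hA
  -- so: log δ + log (u+1) - log u ≤ δ*(u+1)/u - 1
  set L := Real.log (u + 1) - Real.log u with hL
  have hB : L - δ / u ≤ -Real.log δ + δ - 1 := by
    have : δ * (u + 1) / u = δ + δ / u := by field_simp
    rw [this] at hA
    linarith
  -- Step B: H(u) ≥ 0, i.e. u - log u - 1 ≤ (u-1)^2 * L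
  have hH := Hfun_nonneg hu
  unfold Hfun at hH
  have hstep : u - Real.log u - 1 ≤ (u - 1) ^ 2 * L := by rw [hL]; linarith
  -- combine
  have hsq : (0:ℝ) ≤ (u - 1) ^ 2 := sq_nonneg _
  have hC : (L - δ / u) * (u - 1) ^ 2 ≤ (-Real.log δ + δ - 1) * (u - 1) ^ 2 :=
    mul_le_mul_of_nonneg_right hB hsq
  have hid : δ * (u + 1/u - 2) = δ / u * (u - 1) ^ 2 := by
    field_simp
    ring_nf
  calc u - Real.log u - 1 ≤ (u - 1) ^ 2 * L := hstep
    _ = δ / u * (u - 1) ^ 2 + (L - δ / u) * (u - 1) ^ 2 := by ring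
    _ ≤ δ * (u + 1/u - 2) + (-Real.log δ + δ - 1) * (u - 1) ^ 2 := by
        rw [hid]; linarith
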